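/- For every n ≥ 3, the full subdivision SK_n of the complete graph K_n, embedded in the hypercube Q_n by sending each original vertex u_i to the singleton {i} and each subdivision vertex u_{i,j} to the pair {i,j}, is an isometric subgraph of Q_n of VC-dimension exactly 2. -/

import Mathlib

open Finset

/-- The hypercube graph on subsets of `Fin m`. -/
def cubeGraph (m : ℕ) : SimpleGraph (Finset (Fin m)) where
  Adj A B := (symmDiff A B).card = 1
  symm := ⟨fun A B h => by show (symmDiff B A).card = 1; rwa [symmDiff_comm]⟩
  loopless := ⟨fun A h => by simp only [symmDiff_self, bot_eq_empty, card_empty] at h; exact absurd h (by norm_num)⟩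

/-- `V` is (the vertex set of) a partial cube isometrically embedded in `Q_m`:
the distance in the induced subgraph equals the Hamming distance. -/
def IsPC {m : ℕ} (V : Set (Finset (Fin m))) : Prop :=
  ∀ u v : V, ((cubeGraph m).induce V).dist u v = (symmDiff u.1 v.1).card

def Shatters {m : ℕ} (V : Set (Finset (Fin m))) (Y : Finset (Fin m)) : Prop :=
  ∀ Z ⊆ Y, ∃ B ∈ V, B ∩ Y = Z

def VCdimLE {m : ℕ} (V : Set (Finset (Fin m))) (d : ℕ) : Prop :=
  ∀ Y : Finset (Fin m), Shatters V Y → Y.card ≤ d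

inductive PCStep {m : ℕ} : Set (Finset (Fin m)) → Set (Finset (Fin m)) → Prop
  | contract (i : Fin m) (V : Set (Finset (Fin m))) :
      PCStep V ((fun B => B.erase i) '' V)
  | restrictPos (i : Fin m) (V : Set (Finset (Fin m))) :
      PCStep V {B ∈ V | i ∈ B}
  | restrictNeg (i : Fin m) (V : Set (Finset (Fin m))) :
      PCStep V {B ∈ V | i ∉ B}

/-- Partial-cube minor relation: a sequence of contractions and restrictions. -/
def PCMinor {m : ℕ} : Set (Finset (Fin m)) → Set (Finset (Fin m)) → Prop :=
  Relation.ReflTransGen PCStep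

/-- `W` is (the vertex set of) a `k`-dimensional subcube of `Q_m`. -/
def IsCubeFam {m : ℕ} (k : ℕ) (W : Set (Finset (Fin m))) : Prop :=
  ∃ (Y X : Finset (Fin m)), Disjoint Y X ∧ X.card = k ∧
    W = {B | ∃ Z ⊆ X, B = Y ∪ Z}

/-- `G` has the cube `Q_k` as a pc-minor. -/
def HasQMinor {m : ℕ} (V : Set (Finset (Fin m))) (k : ℕ) : Prop :=
  ∃ W, PCMinor V W ∧ IsCubeFam k W

def hdist {m : ℕ} (A B : Finset (Fin m)) : ℕ := (symmDiff A B).card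

def IsConvexIn {m : ℕ} (V S : Set (Finset (Fin m))) : Prop :=
  S ⊆ V ∧ ∀ u ∈ S, ∀ v ∈ S, ∀ x ∈ V, hdist u x + hdist x v = hdist u v → x ∈ S

def convexHullIn {m : ℕ} (V S : Set (Finset (Fin m))) : Set (Finset (Fin m)) :=
  ⋂₀ {T | S ⊆ T ∧ IsConvexIn V T}

def IsGatedIn {m : ℕ} (V S : Set (Finset (Fin m))) : Prop :=
  S ⊆ V ∧ ∀ x ∈ V, ∃ g ∈ S, ∀ y ∈ S, hdist x g + hdist g y = hdist x y

/-- The standardly embedded full subdivision `SK_n` in `Q_n`: singletons and pairs. -/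
def SKset (n : ℕ) : Set (Finset (Fin n)) := {B | B.card = 1 ∨ B.card = 2}

/-- A standardly embedded copy of `SK_n` in `Q_m` along the injection `ι`. -/
def skCopy {m : ℕ} (n : ℕ) (ι : Fin n → Fin m) : Set (Finset (Fin m)) :=
  (fun B => B.image ι) '' SKset n



section Aux

open SimpleGraph

variable {n : ℕ}

lemma hdist_eq (A B : Finset (Fin n)) : hdist A B = (A \ B).card + (B \ A).card := by
  rw [hdist, symmDiff_def, Finset.sup_eq_union]
  exact Finset.card_union_of_disjoint disjoint_sdiff_sdiff

lemma hdist_comm (A B : Finset (Fin n)) : hdist A B = hdist B A := by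
  rw [hdist, hdist, symmDiff_comm]

lemma hdist_self (A : Finset (Fin n)) : hdist A A = 0 := by
  simp [hdist]

lemma hdist_of_disjoint {A B : Finset (Fin n)} (h : Disjoint A B) :
    hdist A B = A.card + B.card := by
  rw [hdist_eq, Finset.sdiff_eq_self_of_disjoint h, Finset.sdiff_eq_self_of_disjoint h.symm]

lemma hdist_tri (A B C : Finset (Fin n)) : hdist A C ≤ hdist A B + hdist B C := by
  calc (symmDiff A C).card ≤ (symmDiff A B ∪ symmDiff B C).card := by
        apply Finset.card_le_card
        simpa [Finset.sup_eq_union] using symmDiff_triangle A B C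
    _ ≤ _ := Finset.card_union_le _ _

lemma adj_single_pair {a : Fin n} {P : Finset (Fin n)} (ha : a ∈ P) (hP : P.card = 2) :
    (cubeGraph n).Adj {a} P := by
  show (symmDiff {a} P).card = 1
  have hsub : ({a} : Finset (Fin n)) ⊆ P := Finset.singleton_subset_iff.mpr ha
  rw [symmDiff_def, Finset.sup_eq_union, Finset.sdiff_eq_empty_iff_subset.mpr hsub,
    Finset.empty_union, Finset.card_sdiff_of_subset hsub, hP, Finset.card_singleton]

lemma hdist_single_pair {a : Fin n} {P : Finset (Fin n)} (ha : a ∈ P) (hP : P.card = 2) :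
    hdist {a} P = 1 := adj_single_pair ha hP

lemma inter_card_one {P Q : Finset (Fin n)} (hP : P.card = 2) (hQ : Q.card = 2)
    (hne : P ≠ Q) {x : Fin n} (hx : x ∈ P ∩ Q) : (P ∩ Q).card = 1 := by
  have h1 : 1 ≤ (P ∩ Q).card := Finset.card_pos.mpr ⟨x, hx⟩
  have h2 : (P ∩ Q).card ≤ 2 := hP ▸ Finset.card_le_card Finset.inter_subset_left
  rcases Nat.lt_or_ge (P ∩ Q).card 2 with h | h
  · omega
  · exfalso
    have hPQ : P ∩ Q = P := Finset.eq_of_subset_of_card_le Finset.inter_subset_left (hP ▸ h)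
    have hsub : P ⊆ Q := by rw [← hPQ]; exact Finset.inter_subset_right
    exact hne (Finset.eq_of_subset_of_card_le hsub (by omega))

lemma hdist_pairs_inter {P Q : Finset (Fin n)} (hP : P.card = 2) (hQ : Q.card = 2)
    (hne : P ≠ Q) {x : Fin n} (hx : x ∈ P ∩ Q) : hdist P Q = 2 := by
  have h1 := inter_card_one hP hQ hne hx
  have h2 : (Q ∩ P).card = 1 := by rwa [Finset.inter_comm]
  have e1 := Finset.card_inter_add_card_sdiff P Q
  have e2 := Finset.card_inter_add_card_sdiff Q P
  rw [hdist_eq]; omega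

abbrev SKG (n : ℕ) : SimpleGraph (SKset n) := (cubeGraph n).induce (SKset n)

lemma hdist_le_walk_length {u v : (SKset n)} (w : (SKG n).Walk u v) :
    hdist u.1 v.1 ≤ w.length := by
  induction w with
  | nil => simp [hdist_self]
  | @cons a b c h p ih =>
    have h1 : hdist a.1 b.1 = 1 := h
    have := hdist_tri a.1 b.1 c.1
    rw [Walk.length_cons]
    omega

lemma exists_walk_hdist_single_any (a : Fin n) (ha : ({a} : Finset (Fin n)) ∈ SKset n)
    (v : (SKset n)) :
    ∃ w : (SKG n).Walk ⟨{a}, ha⟩ v, w.length = hdist {a} v.1 := by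
  rcases v with ⟨B, hB⟩
  rcases hB with hB1 | hB2
  · -- B singleton
    obtain ⟨b, rfl⟩ := Finset.card_eq_one.mp hB1
    by_cases hab : a = b
    · subst hab
      exact ⟨Walk.nil, by simp [hdist_self]⟩
    · have hm : ({a, b} : Finset (Fin n)) ∈ SKset n := Or.inr (Finset.card_pair hab)
      have h1 : (SKG n).Adj ⟨{a}, ha⟩ ⟨{a, b}, hm⟩ :=
        adj_single_pair (Finset.mem_insert_self a {b}) (Finset.card_pair hab)
      have h2 : (SKG n).Adj ⟨{a, b}, hm⟩ ⟨{b}, Or.inl (by simp)⟩ :=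
        (adj_single_pair (by simp) (Finset.card_pair hab)).symm
      refine ⟨Walk.cons h1 (Walk.cons h2 Walk.nil), ?_⟩
      have : hdist {a} {b} = 2 := by
        rw [hdist_of_disjoint (Finset.disjoint_singleton.mpr hab)]; simp
      simp [this]
  · -- B pair
    by_cases haB : a ∈ B
    · have h1 : (SKG n).Adj ⟨{a}, ha⟩ ⟨B, Or.inr hB2⟩ := adj_single_pair haB hB2
      exact ⟨Walk.cons h1 Walk.nil, by simp [hdist_single_pair haB hB2]⟩
    · obtain ⟨b, hb⟩ := Finset.card_pos.mp (by omega : 0 < B.card)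
      have hab : a ≠ b := fun h => haB (h ▸ hb)
      have hm : ({a, b} : Finset (Fin n)) ∈ SKset n := Or.inr (Finset.card_pair hab)
      have hbm : ({b} : Finset (Fin n)) ∈ SKset n := Or.inl (by simp)
      have h1 : (SKG n).Adj ⟨{a}, ha⟩ ⟨{a, b}, hm⟩ :=
        adj_single_pair (Finset.mem_insert_self a {b}) (Finset.card_pair hab)
      have h2 : (SKG n).Adj ⟨{a, b}, hm⟩ ⟨{b}, hbm⟩ :=
        (adj_single_pair (by simp) (Finset.card_pair hab)).symm
      have h3 : (SKG n).Adj ⟨{b}, hbm⟩ ⟨B, Or.inr hB2⟩ := adj_single_pair hb hB2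
      refine ⟨Walk.cons h1 (Walk.cons h2 (Walk.cons h3 Walk.nil)), ?_⟩
      have : hdist {a} B = 3 := by
        rw [hdist_of_disjoint (Finset.disjoint_singleton_left.mpr haB), hB2]; simp
      simp [this]

lemma exists_walk_hdist (u v : (SKset n)) :
    ∃ w : (SKG n).Walk u v, w.length = hdist u.1 v.1 := by
  rcases u with ⟨A, hA⟩
  rcases hA with hA1 | hA2
  · obtain ⟨a, rfl⟩ := Finset.card_eq_one.mp hA1
    exact exists_walk_hdist_single_any a (Or.inl (by simp)) v
  · rcases v with ⟨B, hB⟩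
    rcases hB with hB1 | hB2
    · obtain ⟨b, rfl⟩ := Finset.card_eq_one.mp hB1
      obtain ⟨w, hw⟩ := exists_walk_hdist_single_any b (Or.inl (by simp)) ⟨A, Or.inr hA2⟩
      exact ⟨w.reverse, by rw [Walk.length_reverse, hw, hdist_comm]⟩
    · by_cases hAB : A = B
      · subst hAB
        exact ⟨Walk.nil, by simp [hdist_self]⟩
      · by_cases hint : (A ∩ B).Nonempty
        · obtain ⟨x, hx⟩ := hint
          have hxA : x ∈ A := Finset.mem_of_mem_inter_left hx
          have hxB : x ∈ B := Finset.mem_of_mem_inter_right hx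
          have hxm : ({x} : Finset (Fin n)) ∈ SKset n := Or.inl (by simp)
          have h1 : (SKG n).Adj ⟨A, Or.inr hA2⟩ ⟨{x}, hxm⟩ :=
            (adj_single_pair hxA hA2).symm
          have h2 : (SKG n).Adj ⟨{x}, hxm⟩ ⟨B, Or.inr hB2⟩ := adj_single_pair hxB hB2
          refine ⟨Walk.cons h1 (Walk.cons h2 Walk.nil), ?_⟩
          simp [hdist_pairs_inter hA2 hB2 hAB hx]
        · have hdisj : Disjoint A B :=
            Finset.disjoint_iff_inter_eq_empty.mpr (Finset.not_nonempty_iff_eq_empty.mp hint)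
          obtain ⟨a, ha⟩ := Finset.card_pos.mp (by omega : 0 < A.card)
          obtain ⟨c, hc⟩ := Finset.card_pos.mp (by omega : 0 < B.card)
          have hac : a ≠ c := fun h => (Finset.disjoint_left.mp hdisj ha) (h ▸ hc)
          have ham : ({a} : Finset (Fin n)) ∈ SKset n := Or.inl (by simp)
          have hcm : ({c} : Finset (Fin n)) ∈ SKset n := Or.inl (by simp)
          have hacm : ({a, c} : Finset (Fin n)) ∈ SKset n := Or.inr (Finset.card_pair hac)
          have h1 : (SKG n).Adj ⟨A, Or.inr hA2⟩ ⟨{a}, ham⟩ := (adj_single_pair ha hA2).symm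
          have h2 : (SKG n).Adj ⟨{a}, ham⟩ ⟨{a, c}, hacm⟩ :=
            adj_single_pair (Finset.mem_insert_self a {c}) (Finset.card_pair hac)
          have h3 : (SKG n).Adj ⟨{a, c}, hacm⟩ ⟨{c}, hcm⟩ :=
            (adj_single_pair (by simp) (Finset.card_pair hac)).symm
          have h4 : (SKG n).Adj ⟨{c}, hcm⟩ ⟨B, Or.inr hB2⟩ := adj_single_pair hc hB2
          refine ⟨Walk.cons h1 (Walk.cons h2 (Walk.cons h3 (Walk.cons h4 Walk.nil))), ?_⟩
          have h4' : hdist A B = 4 := by rw [hdist_of_disjoint hdisj, hA2, hB2]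
          simp [h4']

end Aux

/-- For `n ≥ 3`, the standardly embedded `SK_n` is an isometric subgraph of
`Q_n` of VC-dimension exactly 2. -/
theorem stmt6 (n : ℕ) (hn : 3 ≤ n) :
    IsPC (SKset n) ∧ VCdimLE (SKset n) 2 ∧
      ∃ Y : Finset (Fin n), Y.card = 2 ∧ Shatters (SKset n) Y := by
  have hSKG : ∀ u v : (SKset n), ((cubeGraph n).induce (SKset n)).dist u v = hdist u.1 v.1 := by
    intro u v
    obtain ⟨w, hw⟩ := exists_walk_hdist u v
    refine le_antisymm (hw ▸ SimpleGraph.dist_le w) ?_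
    obtain ⟨p, hp⟩ := (SimpleGraph.Walk.reachable w).exists_walk_length_eq_dist
    exact hp ▸ hdist_le_walk_length p
  refine ⟨hSKG, ?_, ?_⟩
  · -- VC dimension at most 2
    intro Y hY
    by_contra h
    push_neg at h
    obtain ⟨Z, hZY, hZ3⟩ := Finset.exists_subset_card_eq (by omega : 3 ≤ Y.card)
    obtain ⟨B, hB, hBY⟩ := hY Z hZY
    have hZB : Z ⊆ B := hBY ▸ Finset.inter_subset_left
    have : 3 ≤ B.card := hZ3 ▸ Finset.card_le_card hZB
    rcases hB with h1 | h2 <;> omega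
  · -- a shattered 2-set
    set i0 : Fin n := ⟨0, by omega⟩
    set i1 : Fin n := ⟨1, by omega⟩
    set i2 : Fin n := ⟨2, by omega⟩
    have h01 : i0 ≠ i1 := by simp [i0, i1, Fin.ext_iff]
    have h02 : i0 ≠ i2 := by simp [i0, i2, Fin.ext_iff]
    have h12 : i1 ≠ i2 := by simp [i1, i2, Fin.ext_iff]
    refine ⟨{i0, i1}, Finset.card_pair h01, ?_⟩
    intro Z hZ
    by_cases h0 : i0 ∈ Z <;> by_cases h1 : i1 ∈ Z
    · refine ⟨{i0, i1}, Or.inr (Finset.card_pair h01), ?_⟩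
      rw [Finset.inter_self]
      apply Finset.Subset.antisymm _ hZ
      intro x hx
      rcases Finset.mem_insert.mp hx with rfl | hx
      · exact h0
      · rwa [Finset.mem_singleton.mp hx]
    · refine ⟨{i0}, Or.inl (by simp), ?_⟩
      apply Finset.Subset.antisymm
      · intro x hx
        rw [Finset.mem_inter, Finset.mem_singleton] at hx
        rw [hx.1]; exact h0
      · intro x hx
        rw [Finset.mem_inter, Finset.mem_singleton]
        rcases Finset.mem_insert.mp (hZ hx) with rfl | hx'
        · exact ⟨rfl, Finset.mem_insert_self _ _⟩
        · exact absurd (Finset.mem_singleton.mp hx' ▸ hx) h1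
    · refine ⟨{i1}, Or.inl (by simp), ?_⟩
      apply Finset.Subset.antisymm
      · intro x hx
        rw [Finset.mem_inter, Finset.mem_singleton] at hx
        rw [hx.1]; exact h1
      · intro x hx
        rw [Finset.mem_inter, Finset.mem_singleton]
        rcases Finset.mem_insert.mp (hZ hx) with rfl | hx'
        · exact absurd hx h0
        · exact ⟨Finset.mem_singleton.mp hx', Finset.mem_insert_of_mem hx'⟩
    · refine ⟨{i2}, Or.inl (by simp), ?_⟩
      have hZe : Z = ∅ := by
        apply Finset.eq_empty_of_forall_notMem
        intro x hx
        rcases Finset.mem_insert.mp (hZ hx) with rfl | hx'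
        · exact h0 hx
        · exact h1 (Finset.mem_singleton.mp hx' ▸ hx)
      rw [hZe, Finset.eq_empty_iff_forall_notMem]
      intro x hx
      rw [Finset.mem_inter, Finset.mem_singleton] at hx
      rcases Finset.mem_insert.mp hx.2 with h | h
      · exact h02 (hx.1 ▸ h).symm
      · exact h12 ((hx.1 ▸ Finset.mem_singleton.mp h)).symm
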